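/- Let B₁ and B₂ be bases of a matroid M on a finite ground set S. Then there exists a bijection f : B₁ \ B₂ → B₂ \ B₁ such that for every x ∈ B₁ \ B₂, the set (B₁ \ {x}) ∪ {f(x)} is a base of M. -/

import Mathlib

open Set

/-- Matroid base exchange bijection: for bases `B₁`, `B₂` of a matroid `M` on a finite
ground set, there is a bijection `f : B₁ \ B₂ → B₂ \ B₁` such that for every
`x ∈ B₁ \ B₂` the set `(B₁ \ {x}) ∪ {f(x)}` is a base of `M`. -/
theorem matroid_base_exchange_bijection
    {α : Type*} (M : Matroid α) [M.Finite]
    (B₁ B₂ : Set α) (h₁ : M.IsBase B₁) (h₂ : M.IsBase B₂) :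
    ∃ f : (B₁ \ B₂ : Set α) → (B₂ \ B₁ : Set α), Function.Bijective f ∧
      ∀ x : (B₁ \ B₂ : Set α), M.IsBase (insert (f x : α) (B₁ \ {(x : α)})) := by
  classical
  have hE : M.E.Finite := M.ground_finite
  have hB1fin : B₁.Finite := hE.subset h₁.subset_ground
  have hB2fin : B₂.Finite := hE.subset h₂.subset_ground
  have hD1fin : (B₁ \ B₂).Finite := hB1fin.diff
  have hD2fin : (B₂ \ B₁).Finite := hB2fin.diff
  haveI : Fintype ↥(B₁ \ B₂) := hD1fin.fintype
  haveI : Fintype ↥(B₂ \ B₁) := hD2fin.fintype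
  -- the candidate sets for Hall's theorem
  set t : ↥(B₁ \ B₂) → Finset α :=
    fun x => hD2fin.toFinset.filter (fun y => M.IsBase (insert y (B₁ \ {(x : α)}))) with ht
  -- key: a non-closure element gives a base after exchange
  have keyA : ∀ x : α, x ∈ B₁ → ∀ y : α, y ∈ M.E → y ∉ B₁ →
      y ∉ M.closure (B₁ \ {x}) → M.IsBase (insert y (B₁ \ {x})) := by
    intro x hx y hyE hyB hycl
    have hind : M.Indep (B₁ \ {x}) := h₁.indep.diff _
    rw [hind.notMem_closure_iff hyE] at hycl
    exact h₁.exchange_isBase_of_indep hyB hycl.1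
  -- Hall's condition
  have hall : ∀ s : Finset ↥(B₁ \ B₂), s.card ≤ (s.biUnion t).card := by
    intro s
    set A : Set α := Subtype.val '' (↑s : Set ↥(B₁ \ B₂)) with hA
    have hAsub : A ⊆ B₁ \ B₂ := by
      rintro a ⟨⟨a, ha⟩, -, rfl⟩; exact ha
    set N : Set α := ↑(s.biUnion t) with hN
    have hNsub : N ⊆ B₂ \ B₁ := by
      intro y hy
      simp only [hN, Finset.mem_coe, Finset.mem_biUnion] at hy
      obtain ⟨x, -, hy⟩ := hy
      simp only [ht, Finset.mem_filter, Set.Finite.mem_toFinset] at hy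
      exact hy.1
    -- the key claim : B₂ is spanned by (B₁ \ A) ∪ N
    have hYsub : (B₁ \ A) ∪ N ⊆ M.E :=
      union_subset (diff_subset.trans h₁.subset_ground)
        (hNsub.trans (diff_subset.trans h₂.subset_ground))
    have hclaim : B₂ ⊆ M.closure ((B₁ \ A) ∪ N) := by
      intro y hy
      by_cases hyB1 : y ∈ B₁
      · exact M.subset_closure _ hYsub (Or.inl ⟨hyB1, fun hyA => (hAsub hyA).2 hy⟩)
      by_cases hycl : y ∈ M.closure (B₁ \ A)
      · exact M.closure_subset_closure subset_union_left hycl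
      -- find an exchange partner in A
      have hyE : y ∈ M.E := h₂.subset_ground hy
      have C : ∀ n (J : Set α), J ⊆ B₁ → J.ncard ≤ n → y ∈ M.closure J →
          ∃ x ∈ A, y ∉ M.closure (B₁ \ {x}) := by
        intro n
        induction n with
        | zero =>
          intro J hJ hcard hyJ
          have : J = ∅ := by
            have := hB1fin.subset hJ
            rw [← Set.ncard_eq_zero this]; omega
          exact absurd (M.closure_subset_closure
            (by simp [this]) hyJ) hycl
        | succ n ih =>
          intro J hJ hcard hyJ
          by_cases hJA : J ⊆ B₁ \ A
          · exact absurd (M.closure_subset_closure hJA hyJ) hycl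
          obtain ⟨x, hxJ, hxA⟩ := not_subset.1 hJA
          have hxA : x ∈ A := by
            by_contra h
            exact hxA ⟨hJ hxJ, h⟩
          by_cases hx : y ∈ M.closure (B₁ \ {x})
          · -- then y ∈ closure (J \ {x}), recurse
            have hyJx : y ∈ M.closure (J \ {x}) := by
              by_contra hcon
              have h1 : y ∈ M.closure (insert x (J \ {x})) \ M.closure (J \ {x}) := by
                rw [insert_diff_singleton, insert_eq_of_mem hxJ]
                exact ⟨hyJ, hcon⟩
              have h2 := Matroid.closure_exchange h1
              have h3 : x ∈ M.closure (insert y (B₁ \ {x})) :=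
                M.closure_subset_closure
                  (insert_subset_insert (diff_subset_diff_left hJ)) h2.1
              rw [Matroid.closure_insert_eq_of_mem_closure hx] at h3
              exact h₁.indep.notMem_closure_diff_of_mem (hJ hxJ) h3
            refine ih (J \ {x}) (diff_subset.trans hJ) ?_ hyJx
            have := Set.ncard_diff_singleton_of_mem hxJ
            omega
          · exact ⟨x, hxA, hx⟩
      obtain ⟨x, hxA, hx⟩ := C B₁.ncard B₁ Subset.rfl le_rfl (h₁.closure_eq ▸ hyE)
      have hbase := keyA x (hAsub hxA).1 y hyE hyB1 hx
      -- so y ∈ N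
      obtain ⟨x', hx's, rfl⟩ := hxA
      have : y ∈ N := by
        simp only [hN, Finset.mem_coe, Finset.mem_biUnion]
        exact ⟨x', hx's, by
          simp only [ht, Finset.mem_filter, Set.Finite.mem_toFinset]
          exact ⟨⟨hy, hyB1⟩, hbase⟩⟩
      exact M.subset_closure _ hYsub (Or.inr this)
    -- rank counting
    have hsp : M.Spanning ((B₁ \ A) ∪ N) := by
      rw [Matroid.spanning_iff_closure_eq hYsub]
      apply subset_antisymm (M.closure_subset_ground _)
      have := M.closure_subset_closure_of_subset_closure hclaim
      rw [h₂.closure_eq] at this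
      exact this
    obtain ⟨B, hB, hBY⟩ := hsp.exists_isBase_subset
    have hYfin : ((B₁ \ A) ∪ N).Finite := hE.subset hYsub
    have e1 : B₂.ncard = B.ncard := h₂.ncard_eq_ncard_of_isBase hB
    have e2 : B.ncard ≤ (B₁ \ A).ncard + N.ncard :=
      (Set.ncard_le_ncard hBY hYfin).trans (Set.ncard_union_le _ _)
    have e3 : (B₁ \ A).ncard + A.ncard = B₁.ncard :=
      Set.ncard_diff_add_ncard_of_subset (hAsub.trans diff_subset) hB1fin
    have e4 : B₁.ncard = B₂.ncard := h₁.ncard_eq_ncard_of_isBase h₂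
    have e5 : A.ncard = s.card := by
      rw [hA, Set.ncard_image_of_injective _ Subtype.val_injective]
      simp [Set.ncard_coe_finset]
    have e6 : N.ncard = (s.biUnion t).card := Set.ncard_coe_finset _
    omega
  obtain ⟨f, hfinj, hft⟩ := (Finset.all_card_le_biUnion_card_iff_exists_injective t).1 hall
  have hmem : ∀ x, f x ∈ B₂ \ B₁ ∧ M.IsBase (insert (f x) (B₁ \ {(x : α)})) := by
    intro x
    have := hft x
    simp only [ht, Finset.mem_filter, Set.Finite.mem_toFinset] at this
    exact this
  set g : ↥(B₁ \ B₂) → ↥(B₂ \ B₁) := fun x => ⟨f x, (hmem x).1⟩ with hg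
  have hginj : Function.Injective g := by
    intro a b hab
    exact hfinj (congrArg Subtype.val hab)
  have hcard : Fintype.card ↥(B₁ \ B₂) = Fintype.card ↥(B₂ \ B₁) := by
    have := h₁.ncard_diff_comm h₂
    rwa [← Nat.card_coe_set_eq, ← Nat.card_coe_set_eq,
      Nat.card_eq_fintype_card, Nat.card_eq_fintype_card] at this
  exact ⟨g, (Fintype.bijective_iff_injective_and_card g).2 ⟨hginj, hcard⟩,
    fun x => (hmem x).2⟩
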